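/- Consider the control system ẋ¹ = x² + x³u², ẋ² = x³ + x¹u², ẋ³ = u¹ + x²u², ẋ⁴ = u² with Pfaffian representation S₀ = span{ω₀¹,ω₀²,ω₀³,ω₀⁴}, ω₀¹ = dx¹-(x²+x³u²)dt, ω₀² = dx²-(x³+x¹u²)dt, ω₀³ = dx³-(u¹+x²u²)dt, ω₀⁴ = dx⁴-u²dt. The 1-forms ω₁¹ = dx¹ - x³dx⁴ - x²dt and ω₁² = dx² - x¹dx⁴ - x³dt span the first derived system S₀^{(1)}: each ωᵢ¹ ∈ S₀ (as a pointwise linear combination of the ω₀ʲ) and dω₁ⁱ ∧ ω₀¹ ∧ ω₀² ∧ ω₀³ ∧ ω₀⁴ = 0 for i = 1,2. -/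
import Mathlib


noncomputable section

open scoped BigOperators

/-- Coordinates `(t, x¹, x², x³, x⁴, u¹, u²)` indexed by `0,…,6`. -/
abbrev E7 := Fin 7 → ℝ

def pr7 (i : Fin 7) : E7 →L[ℝ] ℝ := ContinuousLinearMap.proj i

/-- Exterior derivative of a 1-form evaluated on two vectors. -/
def dOne {E : Type*} [NormedAddCommGroup E] [NormedSpace ℝ E]
    (ω : E → E →L[ℝ] ℝ) (x v w : E) : ℝ :=
  fderiv ℝ ω x v w - fderiv ℝ ω x w v

def ω01 : E7 → E7 →L[ℝ] ℝ := fun x => pr7 1 - (x 2 + x 3 * x 6) • pr7 0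
def ω02 : E7 → E7 →L[ℝ] ℝ := fun x => pr7 2 - (x 3 + x 1 * x 6) • pr7 0
def ω03 : E7 → E7 →L[ℝ] ℝ := fun x => pr7 3 - (x 5 + x 2 * x 6) • pr7 0
def ω04 : E7 → E7 →L[ℝ] ℝ := fun x => pr7 4 - x 6 • pr7 0

/-- `ω₁¹ = dx¹ - x³dx⁴ - x²dt`. -/
def ω11 : E7 → E7 →L[ℝ] ℝ := fun x => pr7 1 - x 3 • pr7 4 - x 2 • pr7 0
/-- `ω₁² = dx² - x¹dx⁴ - x³dt`. -/
def ω12 : E7 → E7 →L[ℝ] ℝ := fun x => pr7 2 - x 1 • pr7 4 - x 3 • pr7 0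

/-- The 6-form `η ∧ a ∧ b ∧ c ∧ d` (2-form `η`, 1-forms `a,b,c,d`) evaluated
on six vectors, up to a nonzero combinatorial factor. -/
def wedge21111 (η : E7 → E7 → E7 → ℝ) (a b c d : E7 → E7 →L[ℝ] ℝ)
    (x : E7) (v : Fin 6 → E7) : ℝ :=
  ∑ σ : Equiv.Perm (Fin 6), ((Equiv.Perm.sign σ : ℤ) : ℝ) *
    η x (v (σ 0)) (v (σ 1)) * a x (v (σ 2)) * b x (v (σ 3)) *
      c x (v (σ 4)) * d x (v (σ 5))


lemma prod6 (f0 f1 f2 f3 f4 f5 : E7 → ℝ) (y : Fin 6 → E7) :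
    (∏ k, ![f0,f1,f2,f3,f4,f5] k (y k)) =
      f0 (y 0) * f1 (y 1) * f2 (y 2) * f3 (y 3) * f4 (y 4) * f5 (y 5) := by
  rw [Fin.prod_univ_six]; rfl

lemma altsum_zero (f : Fin 6 → E7 → ℝ) (v : Fin 6 → E7) (i j : Fin 6)
    (hij : i ≠ j) (h : f i = f j) :
    ∑ σ : Equiv.Perm (Fin 6), ((Equiv.Perm.sign σ : ℤ) : ℝ) * ∏ k, f k (v (σ k)) = 0 := by
  have : (∑ σ : Equiv.Perm (Fin 6), ((Equiv.Perm.sign σ : ℤ) : ℝ) * ∏ k, f k (v (σ k)))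
      = (Matrix.of fun a b : Fin 6 => f b (v a)).det := by
    rw [Matrix.det_apply']; rfl
  rw [this, ← Matrix.det_transpose]
  exact Matrix.det_zero_of_row_eq hij (by funext a; simp [Matrix.transpose, h])

lemma dOne11 (x v w : E7) : dOne ω11 x v w =
    w 3 * v 4 + w 2 * v 0 - (v 3 * w 4 + v 2 * w 0) := by
  have hL : ω11 = fun x => pr7 1 - ((pr7 3).smulRight (pr7 4) + (pr7 2).smulRight (pr7 0)) x := by
    funext y; ext z
    simp [ω11, pr7, ContinuousLinearMap.smulRight_apply]; ring
  have hf : fderiv ℝ ω11 x = -((pr7 3).smulRight (pr7 4) + (pr7 2).smulRight (pr7 0)) := by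
    rw [hL, fderiv_const_sub, ContinuousLinearMap.fderiv]
  simp [dOne, hf, pr7, ContinuousLinearMap.smulRight_apply]; ring

lemma dOne12 (x v w : E7) : dOne ω12 x v w =
    w 1 * v 4 + w 3 * v 0 - (v 1 * w 4 + v 3 * w 0) := by
  have hL : ω12 = fun x => pr7 2 - ((pr7 1).smulRight (pr7 4) + (pr7 3).smulRight (pr7 0)) x := by
    funext y; ext z
    simp [ω12, pr7, ContinuousLinearMap.smulRight_apply]; ring
  have hf : fderiv ℝ ω12 x = -((pr7 1).smulRight (pr7 4) + (pr7 3).smulRight (pr7 0)) := by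
    rw [hL, fderiv_const_sub, ContinuousLinearMap.fderiv]
  simp [dOne, hf, pr7, ContinuousLinearMap.smulRight_apply]; ring

/-- For the Pfaffian representation `S₀ = span{ω₀¹,ω₀²,ω₀³,ω₀⁴}` of the system
`ẋ¹ = x² + x³u²`, `ẋ² = x³ + x¹u²`, `ẋ³ = u¹ + x²u²`, `ẋ⁴ = u²`, the 1-forms
`ω₁¹ = dx¹ - x³dx⁴ - x²dt`, `ω₁² = dx² - x¹dx⁴ - x³dt` span the first derived
system: each is a pointwise linear combination of the `ω₀ʲ` and
`dω₁ⁱ ∧ ω₀¹ ∧ ω₀² ∧ ω₀³ ∧ ω₀⁴ = 0` for `i = 1,2`. -/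
theorem derived_system_of_CharletSIAM_example :
    ∀ x : E7,
      (∃ c : Fin 4 → ℝ,
        ω11 x = c 0 • ω01 x + c 1 • ω02 x + c 2 • ω03 x + c 3 • ω04 x) ∧
      (∃ c : Fin 4 → ℝ,
        ω12 x = c 0 • ω01 x + c 1 • ω02 x + c 2 • ω03 x + c 3 • ω04 x) ∧
      (∀ v : Fin 6 → E7,
        wedge21111 (fun x' v' w' => dOne ω11 x' v' w') ω01 ω02 ω03 ω04 x v = 0) ∧
      (∀ v : Fin 6 → E7,
        wedge21111 (fun x' v' w' => dOne ω12 x' v' w') ω01 ω02 ω03 ω04 x v = 0) := by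
  intro x
  have hO1 : ∀ y : E7, ω01 x y = y 1 - (x 2 + x 3 * x 6) * y 0 := fun y => by simp [ω01, pr7]
  have hO2 : ∀ y : E7, ω02 x y = y 2 - (x 3 + x 1 * x 6) * y 0 := fun y => by simp [ω02, pr7]
  have hO3 : ∀ y : E7, ω03 x y = y 3 - (x 5 + x 2 * x 6) * y 0 := fun y => by simp [ω03, pr7]
  have hO4 : ∀ y : E7, ω04 x y = y 4 - x 6 * y 0 := fun y => by simp [ω04, pr7]
  refine ⟨⟨![1, 0, 0, -x 3], ?_⟩, ⟨![0, 1, 0, -x 1], ?_⟩, ?_, ?_⟩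
  · show ω11 x = (1:ℝ) • ω01 x + (0:ℝ) • ω02 x + (0:ℝ) • ω03 x + (-x 3) • ω04 x
    ext z
    simp [ω11, ω01, ω02, ω03, ω04, pr7]
    ring
  · show ω12 x = (0:ℝ) • ω01 x + (1:ℝ) • ω02 x + (0:ℝ) • ω03 x + (-x 1) • ω04 x
    ext z
    simp [ω12, ω01, ω02, ω03, ω04, pr7]
    ring
  · intro v
    have step : ∀ σ : Equiv.Perm (Fin 6),
        ((Equiv.Perm.sign σ : ℤ) : ℝ) *
          dOne ω11 x (v (σ 0)) (v (σ 1)) * ω01 x (v (σ 2)) * ω02 x (v (σ 3)) *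
            ω03 x (v (σ 4)) * ω04 x (v (σ 5)) =
        (-1) * (((Equiv.Perm.sign σ : ℤ) : ℝ) * ∏ k, ![(fun y => ω03 x y),(fun y => ω04 x y),(fun y => ω01 x y),(fun y => ω02 x y),(fun y => ω03 x y),(fun y => ω04 x y)] k (v (σ k)))
      + (((Equiv.Perm.sign σ : ℤ) : ℝ) * ∏ k, ![(fun y => ω04 x y),(fun y => ω03 x y),(fun y => ω01 x y),(fun y => ω02 x y),(fun y => ω03 x y),(fun y => ω04 x y)] k (v (σ k)))
      + (-(x 6)) * (((Equiv.Perm.sign σ : ℤ) : ℝ) * ∏ k, ![(fun y => ω03 x y),(fun y : E7 => y 0),(fun y => ω01 x y),(fun y => ω02 x y),(fun y => ω03 x y),(fun y => ω04 x y)] k (v (σ k)))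
      + (x 6) * (((Equiv.Perm.sign σ : ℤ) : ℝ) * ∏ k, ![(fun y : E7 => y 0),(fun y => ω03 x y),(fun y => ω01 x y),(fun y => ω02 x y),(fun y => ω03 x y),(fun y => ω04 x y)] k (v (σ k)))
      + (x 5 + x 2 * x 6) * (((Equiv.Perm.sign σ : ℤ) : ℝ) * ∏ k, ![(fun y => ω04 x y),(fun y : E7 => y 0),(fun y => ω01 x y),(fun y => ω02 x y),(fun y => ω03 x y),(fun y => ω04 x y)] k (v (σ k)))
      + (-(x 5 + x 2 * x 6)) * (((Equiv.Perm.sign σ : ℤ) : ℝ) * ∏ k, ![(fun y : E7 => y 0),(fun y => ω04 x y),(fun y => ω01 x y),(fun y => ω02 x y),(fun y => ω03 x y),(fun y => ω04 x y)] k (v (σ k)))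
      + (-1) * (((Equiv.Perm.sign σ : ℤ) : ℝ) * ∏ k, ![(fun y => ω02 x y),(fun y : E7 => y 0),(fun y => ω01 x y),(fun y => ω02 x y),(fun y => ω03 x y),(fun y => ω04 x y)] k (v (σ k)))
      + (((Equiv.Perm.sign σ : ℤ) : ℝ) * ∏ k, ![(fun y : E7 => y 0),(fun y => ω02 x y),(fun y => ω01 x y),(fun y => ω02 x y),(fun y => ω03 x y),(fun y => ω04 x y)] k (v (σ k))) := by
      intro σ
      simp only [prod6, dOne11, hO1, hO2, hO3, hO4]
      ring
    simp only [wedge21111]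
    rw [Finset.sum_congr rfl fun σ _ => step σ]
    simp only [Finset.sum_add_distrib, ← Finset.mul_sum]
    rw [altsum_zero ![(fun y => ω03 x y),(fun y => ω04 x y),(fun y => ω01 x y),(fun y => ω02 x y),(fun y => ω03 x y),(fun y => ω04 x y)] v 0 4 (by decide) rfl]
    rw [altsum_zero ![(fun y => ω04 x y),(fun y => ω03 x y),(fun y => ω01 x y),(fun y => ω02 x y),(fun y => ω03 x y),(fun y => ω04 x y)] v 0 5 (by decide) rfl]
    rw [altsum_zero ![(fun y => ω03 x y),(fun y : E7 => y 0),(fun y => ω01 x y),(fun y => ω02 x y),(fun y => ω03 x y),(fun y => ω04 x y)] v 0 4 (by decide) rfl]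
    rw [altsum_zero ![(fun y : E7 => y 0),(fun y => ω03 x y),(fun y => ω01 x y),(fun y => ω02 x y),(fun y => ω03 x y),(fun y => ω04 x y)] v 1 4 (by decide) rfl]
    rw [altsum_zero ![(fun y => ω04 x y),(fun y : E7 => y 0),(fun y => ω01 x y),(fun y => ω02 x y),(fun y => ω03 x y),(fun y => ω04 x y)] v 0 5 (by decide) rfl]
    rw [altsum_zero ![(fun y : E7 => y 0),(fun y => ω04 x y),(fun y => ω01 x y),(fun y => ω02 x y),(fun y => ω03 x y),(fun y => ω04 x y)] v 1 5 (by decide) rfl]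
    rw [altsum_zero ![(fun y => ω02 x y),(fun y : E7 => y 0),(fun y => ω01 x y),(fun y => ω02 x y),(fun y => ω03 x y),(fun y => ω04 x y)] v 0 3 (by decide) rfl]
    rw [altsum_zero ![(fun y : E7 => y 0),(fun y => ω02 x y),(fun y => ω01 x y),(fun y => ω02 x y),(fun y => ω03 x y),(fun y => ω04 x y)] v 1 3 (by decide) rfl]
    ring
  · intro v
    have step : ∀ σ : Equiv.Perm (Fin 6),
        ((Equiv.Perm.sign σ : ℤ) : ℝ) *
          dOne ω12 x (v (σ 0)) (v (σ 1)) * ω01 x (v (σ 2)) * ω02 x (v (σ 3)) *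
            ω03 x (v (σ 4)) * ω04 x (v (σ 5)) =
        (-1) * (((Equiv.Perm.sign σ : ℤ) : ℝ) * ∏ k, ![(fun y => ω01 x y),(fun y => ω04 x y),(fun y => ω01 x y),(fun y => ω02 x y),(fun y => ω03 x y),(fun y => ω04 x y)] k (v (σ k)))
      + (((Equiv.Perm.sign σ : ℤ) : ℝ) * ∏ k, ![(fun y => ω04 x y),(fun y => ω01 x y),(fun y => ω01 x y),(fun y => ω02 x y),(fun y => ω03 x y),(fun y => ω04 x y)] k (v (σ k)))
      + (-(x 6)) * (((Equiv.Perm.sign σ : ℤ) : ℝ) * ∏ k, ![(fun y => ω01 x y),(fun y : E7 => y 0),(fun y => ω01 x y),(fun y => ω02 x y),(fun y => ω03 x y),(fun y => ω04 x y)] k (v (σ k)))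
      + (x 6) * (((Equiv.Perm.sign σ : ℤ) : ℝ) * ∏ k, ![(fun y : E7 => y 0),(fun y => ω01 x y),(fun y => ω01 x y),(fun y => ω02 x y),(fun y => ω03 x y),(fun y => ω04 x y)] k (v (σ k)))
      + (x 2 + x 3 * x 6) * (((Equiv.Perm.sign σ : ℤ) : ℝ) * ∏ k, ![(fun y => ω04 x y),(fun y : E7 => y 0),(fun y => ω01 x y),(fun y => ω02 x y),(fun y => ω03 x y),(fun y => ω04 x y)] k (v (σ k)))
      + (-(x 2 + x 3 * x 6)) * (((Equiv.Perm.sign σ : ℤ) : ℝ) * ∏ k, ![(fun y : E7 => y 0),(fun y => ω04 x y),(fun y => ω01 x y),(fun y => ω02 x y),(fun y => ω03 x y),(fun y => ω04 x y)] k (v (σ k)))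
      + (-1) * (((Equiv.Perm.sign σ : ℤ) : ℝ) * ∏ k, ![(fun y => ω03 x y),(fun y : E7 => y 0),(fun y => ω01 x y),(fun y => ω02 x y),(fun y => ω03 x y),(fun y => ω04 x y)] k (v (σ k)))
      + (((Equiv.Perm.sign σ : ℤ) : ℝ) * ∏ k, ![(fun y : E7 => y 0),(fun y => ω03 x y),(fun y => ω01 x y),(fun y => ω02 x y),(fun y => ω03 x y),(fun y => ω04 x y)] k (v (σ k))) := by
      intro σ
      simp only [prod6, dOne12, hO1, hO2, hO3, hO4]
      ring
    simp only [wedge21111]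
    rw [Finset.sum_congr rfl fun σ _ => step σ]
    simp only [Finset.sum_add_distrib, ← Finset.mul_sum]
    rw [altsum_zero ![(fun y => ω01 x y),(fun y => ω04 x y),(fun y => ω01 x y),(fun y => ω02 x y),(fun y => ω03 x y),(fun y => ω04 x y)] v 0 2 (by decide) rfl]
    rw [altsum_zero ![(fun y => ω04 x y),(fun y => ω01 x y),(fun y => ω01 x y),(fun y => ω02 x y),(fun y => ω03 x y),(fun y => ω04 x y)] v 0 5 (by decide) rfl]
    rw [altsum_zero ![(fun y => ω01 x y),(fun y : E7 => y 0),(fun y => ω01 x y),(fun y => ω02 x y),(fun y => ω03 x y),(fun y => ω04 x y)] v 0 2 (by decide) rfl]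
    rw [altsum_zero ![(fun y : E7 => y 0),(fun y => ω01 x y),(fun y => ω01 x y),(fun y => ω02 x y),(fun y => ω03 x y),(fun y => ω04 x y)] v 1 2 (by decide) rfl]
    rw [altsum_zero ![(fun y => ω04 x y),(fun y : E7 => y 0),(fun y => ω01 x y),(fun y => ω02 x y),(fun y => ω03 x y),(fun y => ω04 x y)] v 0 5 (by decide) rfl]
    rw [altsum_zero ![(fun y : E7 => y 0),(fun y => ω04 x y),(fun y => ω01 x y),(fun y => ω02 x y),(fun y => ω03 x y),(fun y => ω04 x y)] v 1 5 (by decide) rfl]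
    rw [altsum_zero ![(fun y => ω03 x y),(fun y : E7 => y 0),(fun y => ω01 x y),(fun y => ω02 x y),(fun y => ω03 x y),(fun y => ω04 x y)] v 0 4 (by decide) rfl]
    rw [altsum_zero ![(fun y : E7 => y 0),(fun y => ω03 x y),(fun y => ω01 x y),(fun y => ω02 x y),(fun y => ω03 x y),(fun y => ω04 x y)] v 1 4 (by decide) rfl]
    ring
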